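/- For t ≥ 4, define h: [0,1] → ℝ by h(y) = 1 − ty + ty^{t−1} − y^t. Then h is strictly convex on (0,1], h(0) = 1, h(1) = 0, h'(1) = t(t−3) > 0, and there exists a unique y* ∈ (0,1) with h(y*) = 0, h > 0 on [0, y*), and h < 0 on (y*, 1). Moreover 1/t < y* < 1/(t−1). -/

import Mathlib

private lemma deriv1 (t : ℕ) (ht : 4 ≤ t) :
    deriv (fun y : ℝ => 1 - t * y + t * y ^ (t - 1) - y ^ t)
      = fun y : ℝ => -(t : ℝ) + t * ((t - 1 : ℕ) * y ^ (t - 2)) - t * y ^ (t - 1) := by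
  funext y
  have h : HasDerivAt (fun y : ℝ => 1 - t * y + t * y ^ (t - 1) - y ^ t)
      (-(t : ℝ) + t * ((t - 1 : ℕ) * y ^ (t - 2)) - t * y ^ (t - 1)) y := by
    have h1 : HasDerivAt (fun y : ℝ => 1 - (t : ℝ) * y) (-(t : ℝ)) y := by
      simpa using ((hasDerivAt_id y).const_mul (t : ℝ)).const_sub 1
    have h2 : HasDerivAt (fun y : ℝ => (t : ℝ) * y ^ (t - 1))
        ((t : ℝ) * ((t - 1 : ℕ) * y ^ (t - 2))) y := by
      have := (hasDerivAt_pow (t - 1) y).const_mul (t : ℝ)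
      rwa [show t - 1 - 1 = t - 2 from by omega] at this
    have h3 : HasDerivAt (fun y : ℝ => y ^ t) ((t : ℝ) * y ^ (t - 1)) y := hasDerivAt_pow t y
    exact (h1.add h2).sub h3
  exact h.deriv

private lemma deriv2 (t : ℕ) (ht : 4 ≤ t) (y : ℝ) :
    deriv (fun y : ℝ => -(t : ℝ) + t * ((t - 1 : ℕ) * y ^ (t - 2)) - t * y ^ (t - 1)) y
      = (t : ℝ) * ((t - 1 : ℕ) * ((t - 2 : ℕ) * y ^ (t - 3))) - t * ((t - 1 : ℕ) * y ^ (t - 2)) := by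
  have h : HasDerivAt (fun y : ℝ => -(t : ℝ) + t * ((t - 1 : ℕ) * y ^ (t - 2)) - t * y ^ (t - 1))
      ((t : ℝ) * ((t - 1 : ℕ) * ((t - 2 : ℕ) * y ^ (t - 3))) - t * ((t - 1 : ℕ) * y ^ (t - 2))) y := by
    have h2 : HasDerivAt (fun y : ℝ => (t : ℝ) * ((t - 1 : ℕ) * y ^ (t - 2)))
        ((t : ℝ) * ((t - 1 : ℕ) * ((t - 2 : ℕ) * y ^ (t - 3)))) y := by
      have := ((hasDerivAt_pow (t - 2) y).const_mul ((t - 1 : ℕ) : ℝ)).const_mul (t : ℝ)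
      rwa [show t - 2 - 1 = t - 3 from by omega] at this
    have h3 : HasDerivAt (fun y : ℝ => (t : ℝ) * y ^ (t - 1))
        ((t : ℝ) * ((t - 1 : ℕ) * y ^ (t - 2))) y := by
      have := (hasDerivAt_pow (t - 1) y).const_mul (t : ℝ)
      rwa [show t - 1 - 1 = t - 2 from by omega] at this
    exact (((hasDerivAt_const y (-(t : ℝ))).add h2).sub h3).congr_deriv (by ring)
  exact h.deriv

private lemma convlem {f : ℝ → ℝ} {s : Set ℝ} (hf : StrictConvexOn ℝ s f) {x y z : ℝ}
    (hx : x ∈ s) (hy : y ∈ s) (hxz : x < z) (hzy : z < y) :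
    f z < (y - z) / (y - x) * f x + (z - x) / (y - x) * f y := by
  have hxy : x < y := hxz.trans hzy
  have hd : (0 : ℝ) < y - x := by linarith
  have ha : (0 : ℝ) < (y - z) / (y - x) := div_pos (by linarith) hd
  have hb : (0 : ℝ) < (z - x) / (y - x) := div_pos (by linarith) hd
  have hab : (y - z) / (y - x) + (z - x) / (y - x) = 1 := by field_simp; ring
  have := hf.2 hx hy (ne_of_lt hxy) ha hb hab
  have hz : (y - z) / (y - x) * x + (z - x) / (y - x) * y = z := by
    field_simp
    ring
  simp only [smul_eq_mul] at this
  rwa [hz] at this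

theorem stmt13 (t : ℕ) (ht : 4 ≤ t) :
    StrictConvexOn ℝ (Set.Ioc (0 : ℝ) 1)
      (fun y : ℝ => 1 - t * y + t * y ^ (t - 1) - y ^ t) ∧
    (1 - (t : ℝ) * 0 + t * (0 : ℝ) ^ (t - 1) - (0 : ℝ) ^ t = 1) ∧
    (1 - (t : ℝ) * 1 + t * (1 : ℝ) ^ (t - 1) - (1 : ℝ) ^ t = 0) ∧
    deriv (fun y : ℝ => 1 - t * y + t * y ^ (t - 1) - y ^ t) 1 = (t : ℝ) * ((t : ℝ) - 3) ∧
    (0 : ℝ) < (t : ℝ) * ((t : ℝ) - 3) ∧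
    (∃! ys : ℝ, ys ∈ Set.Ioo (0 : ℝ) 1 ∧
      (1 - (t : ℝ) * ys + t * ys ^ (t - 1) - ys ^ t = 0) ∧
      (∀ z ∈ Set.Ico (0 : ℝ) ys, 0 < 1 - (t : ℝ) * z + t * z ^ (t - 1) - z ^ t) ∧
      (∀ z ∈ Set.Ioo ys (1 : ℝ), 1 - (t : ℝ) * z + t * z ^ (t - 1) - z ^ t < 0) ∧
      1 / (t : ℝ) < ys ∧ ys < 1 / ((t : ℝ) - 1)) := by
  set f : ℝ → ℝ := fun y : ℝ => 1 - t * y + t * y ^ (t - 1) - y ^ t with hf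
  have ht4 : (4 : ℝ) ≤ (t : ℝ) := by exact_mod_cast ht
  have hc1 : ((t - 1 : ℕ) : ℝ) = (t : ℝ) - 1 := by
    have : (1 : ℕ) ≤ t := by omega
    push_cast [Nat.cast_sub this]; ring
  have hc2 : ((t - 2 : ℕ) : ℝ) = (t : ℝ) - 2 := by
    have : (2 : ℕ) ≤ t := by omega
    push_cast [Nat.cast_sub this]; ring
  have hcont : Continuous f := by fun_prop
  -- strict convexity
  have hconv : StrictConvexOn ℝ (Set.Ioc (0 : ℝ) 1) f := by
    apply strictConvexOn_of_deriv2_pos (convex_Ioc 0 1) hcont.continuousOn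
    intro y hy
    rw [interior_Ioc, Set.mem_Ioo] at hy
    have hy0 : 0 < y := hy.1
    have hy1 : y < 1 := hy.2
    show 0 < deriv (deriv f) y
    rw [hf, deriv1 t ht, deriv2 t ht, hc1, hc2]
    have hpow : y ^ (t - 2) = y ^ (t - 3) * y := by
      rw [show t - 2 = (t - 3) + 1 from by omega, pow_succ]
    rw [hpow]
    have h1 : 0 < y ^ (t - 3) := pow_pos hy0 _
    have e : (t : ℝ) * (((t : ℝ) - 1) * (((t : ℝ) - 2) * y ^ (t - 3))) -
        (t : ℝ) * (((t : ℝ) - 1) * (y ^ (t - 3) * y))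
        = (t : ℝ) * (((t : ℝ) - 1) * y ^ (t - 3)) * (((t : ℝ) - 2) - y) := by ring
    rw [e]
    apply mul_pos (mul_pos (by linarith) (mul_pos (by linarith) h1)) (by linarith)
  have hf0 : f 0 = 1 := by
    simp [hf, zero_pow (show t - 1 ≠ 0 by omega), zero_pow (show t ≠ 0 by omega)]
  have hf1 : f 1 = 0 := by simp [hf]
  -- existence via IVT
  have ht0 : (0 : ℝ) < t := by linarith
  have hs0 : (0 : ℝ) < (t : ℝ) - 1 := by linarith
  have hab : (1 : ℝ) / t < 1 / ((t : ℝ) - 1) := by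
    apply one_div_lt_one_div_of_lt hs0; linarith
  have hfa : 0 < f (1 / (t : ℝ)) := by
    have hp : 0 < ((1 : ℝ) / t) ^ (t - 1) := pow_pos (by positivity) _
    have e1 : (1 : ℝ) - t * (1 / t) = 0 := by field_simp; ring
    have e2 : ((1 : ℝ) / t) ^ t = ((1 : ℝ) / t) ^ (t - 1) * (1 / t) := by
      rw [← pow_succ, show (t - 1) + 1 = t from by omega]
    have e3 : ((1 : ℝ) / t) ^ (t - 1) * (1 / t) < (t : ℝ) * ((1 : ℝ) / t) ^ (t - 1) := by
      have : (1 : ℝ) / t < (t : ℝ) := by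
        have : (1 : ℝ) / t ≤ 1 := by
          rw [div_le_one ht0]; linarith
        linarith
      nlinarith [hp]
    show 0 < 1 - (t : ℝ) * (1 / t) + t * ((1 : ℝ) / t) ^ (t - 1) - ((1 : ℝ) / t) ^ t
    rw [e2]; linarith
  have hfb : f (1 / ((t : ℝ) - 1)) < 0 := by
    set s : ℝ := (t : ℝ) - 1 with hsdef
    set y : ℝ := 1 / s with hydef
    have hy0 : 0 < y := by positivity
    have hs1 : (1 : ℝ) ≤ s := by linarith
    have key : (t : ℝ) < s ^ (t - 2) := by
      have h1 : s ^ 2 ≤ s ^ (t - 2) := pow_le_pow_right₀ hs1 (by omega)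
      nlinarith [ht4]
    have e1 : (1 : ℝ) - t * y = -y := by
      rw [hydef]; field_simp; ring
    have e2 : (t : ℝ) * y ^ (t - 1) < y := by
      have hyt2 : y ^ (t - 2) = (s ^ (t - 2))⁻¹ := by
        rw [hydef, one_div, inv_pow]
      have h1 : (t : ℝ) * y ^ (t - 2) < 1 := by
        rw [hyt2]
        have := (div_lt_one (pow_pos (by linarith : (0:ℝ) < s) (t - 2))).mpr key
        rwa [div_eq_mul_inv] at this
      calc (t : ℝ) * y ^ (t - 1) = ((t : ℝ) * y ^ (t - 2)) * y := by
            rw [show t - 1 = (t - 2) + 1 from by omega, pow_succ]; ring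
        _ < 1 * y := mul_lt_mul_of_pos_right h1 hy0
        _ = y := one_mul y
    have e3 : 0 < y ^ t := pow_pos hy0 t
    show 1 - (t : ℝ) * y + t * y ^ (t - 1) - y ^ t < 0
    linarith
  obtain ⟨ys, hysm, hysz⟩ : ∃ ys ∈ Set.Ioo ((1:ℝ)/t) (1/((t:ℝ)-1)), f ys = 0 := by
    have := intermediate_value_Ioo' (le_of_lt hab) hcont.continuousOn
    have h0 : (0 : ℝ) ∈ Set.Ioo (f (1/((t:ℝ)-1))) (f (1/(t:ℝ))) := ⟨hfb, hfa⟩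
    obtain ⟨ys, hm, hv⟩ := this h0
    exact ⟨ys, hm, hv⟩
  have hys0 : 0 < ys := lt_trans (by positivity) hysm.1
  have hys1 : ys < 1 := by
    have : (1 : ℝ) / ((t : ℝ) - 1) ≤ 1 / 3 := by
      apply one_div_le_one_div_of_le (by norm_num); linarith
    linarith [hysm.2]
  have hysIoc : ys ∈ Set.Ioc (0 : ℝ) 1 := ⟨hys0, le_of_lt hys1⟩
  have h1Ioc : (1 : ℝ) ∈ Set.Ioc (0 : ℝ) 1 := ⟨by norm_num, le_refl 1⟩
  -- sign conditions
  have hneg : ∀ z ∈ Set.Ioo ys (1 : ℝ), f z < 0 := by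
    intro z hz
    have := convlem hconv hysIoc h1Ioc hz.1 hz.2
    rw [hysz, hf1] at this
    simpa using this
  have hpos : ∀ z ∈ Set.Ico (0 : ℝ) ys, 0 < f z := by
    intro z hz
    rcases eq_or_lt_of_le hz.1 with h | h
    · rw [← h, hf0]; norm_num
    · have hzIoc : z ∈ Set.Ioc (0 : ℝ) 1 := ⟨h, by linarith [hz.2]⟩
      have := convlem hconv hzIoc h1Ioc hz.2 hys1
      rw [hysz, hf1, mul_zero, add_zero] at this
      have ha : 0 < (1 - ys) / (1 - z) := by
        apply div_pos <;> linarith [hz.2]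
      by_contra hle
      push_neg at hle
      nlinarith [mul_nonpos_of_nonneg_of_nonpos ha.le hle]
  refine ⟨hconv, by
      simp [zero_pow (show t - 1 ≠ 0 by omega), zero_pow (show t ≠ 0 by omega)],
    by norm_num, ?_, by nlinarith, ?_⟩
  · rw [deriv1 t ht, hc1]; simp; ring
  · refine ⟨ys, ⟨⟨hys0, hys1⟩, hysz, hpos, hneg, hysm.1, hysm.2⟩, ?_⟩
    rintro y' ⟨hy'm, hy'z, -, -, -, -⟩
    have hz' : f y' = 0 := hy'z
    by_contra hne
    rcases lt_or_gt_of_ne hne with h | h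
    · have := hpos y' ⟨le_of_lt hy'm.1, h⟩
      rw [hz'] at this; exact lt_irrefl 0 this
    · have := hneg y' ⟨h, hy'm.2⟩
      rw [hz'] at this; exact lt_irrefl 0 this
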